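/- (Lemma 3.1) For all x ∈ ℝ: v'(x) ≥ v(x) and |u'(x)| ≥ u(x); moreover v(x) ≥ e^{x−t}·v(t) whenever x ≥ t, u(x) ≥ e^{t−x}·u(t) whenever x ≤ t, and ρ(x) = u(x)v(x) ≤ 1 for all x ∈ ℝ. -/

import Mathlib

open MeasureTheory Filter Real Set
open scoped ENNReal

noncomputable section

/-- Condition (1.5): for every `a > 0`, `∫_{x-a}^{x+a} q(t) dt → ∞` as `|x| → ∞`. -/
def Cond15 (q : ℝ → ℝ) : Prop :=
  ∀ a : ℝ, 0 < a → Tendsto (fun x => ∫ t in (x - a)..(x + a), q t) (cocompact ℝ) atTop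

/-- `(u, v)` is a principal fundamental system of solutions (PFSS) of `z'' = q z`.
Local absolute continuity of `u'` together with `u'' = q u` a.e. is encoded via the
fundamental theorem of calculus: `u' b - u' a = ∫_a^b q t * u t dt` for all `a, b`. -/
def IsPFSS (q u v : ℝ → ℝ) : Prop :=
  ContDiff ℝ 1 u ∧ ContDiff ℝ 1 v ∧
  (∀ a b : ℝ, deriv u b - deriv u a = ∫ t in a..b, q t * u t) ∧
  (∀ a b : ℝ, deriv v b - deriv v a = ∫ t in a..b, q t * v t) ∧
  (∀ x, 0 < u x) ∧ (∀ x, 0 < v x) ∧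
  (∀ x, deriv u x < 0) ∧ (∀ x, 0 < deriv v x) ∧
  (∀ x, deriv v x * u x - deriv u x * v x = 1) ∧
  (∀ x, u x = v x * ∫ t in Set.Ioi x, ((v t) ^ 2)⁻¹) ∧
  Tendsto u atTop (nhds 0) ∧ Tendsto (deriv u) atTop (nhds 0) ∧
  Tendsto v atTop atTop ∧ Tendsto (deriv v) atTop atTop ∧
  Tendsto v atBot (nhds 0) ∧ Tendsto (deriv v) atBot (nhds 0) ∧
  Tendsto u atBot atTop ∧ Tendsto (fun x => |deriv u x|) atBot atTop

/-- The Green function: `G(x,t) = u(x) v(t)` for `x ≥ t`, `G(x,t) = u(t) v(x)` for `x ≤ t`. -/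
def GreenFn (u v : ℝ → ℝ) (x t : ℝ) : ℝ := if x ≤ t then u t * v x else u x * v t

/-- The Green operator `(Gf)(x) = ∫_ℝ G(x,t) f(t) dt`. -/
def GreenOp (u v f : ℝ → ℝ) (x : ℝ) : ℝ := ∫ t, GreenFn u v x t * f t

lemma fubini_step' {h Φ φ : ℝ → ℝ} {a b : ℝ} (hab : a ≤ b)
    (hh : IntegrableOn h (Set.Ioc a b)) (hΦ : ∀ x, HasDerivAt Φ (φ x) x) (hφ : Continuous φ) :
    (∫ t in a..b, φ t * (∫ s in a..t, h s)) = ∫ s in a..b, (Φ b - Φ s) * h s := by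
  set μ : Measure ℝ := volume.restrict (Set.Ioc a b) with hμ
  haveI : IsFiniteMeasure μ := by
    constructor
    rw [hμ, Measure.restrict_apply_univ, Real.volume_Ioc]
    exact ENNReal.ofReal_lt_top
  set S : Set (ℝ × ℝ) := {p : ℝ × ℝ | p.2 ≤ p.1} with hS
  have hSm : MeasurableSet S := (isClosed_le continuous_snd continuous_fst).measurableSet
  set g : ℝ × ℝ → ℝ := fun p => φ p.1 * h p.2 with hg
  have hgint : Integrable g (μ.prod μ) := by
    apply Integrable.mul_prod (hφ.integrableOn_Ioc) hh
  have hFint : Integrable (S.indicator g) (μ.prod μ) := hgint.indicator hSm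
  have swap := integral_integral_swap
    (f := fun t s => S.indicator g (t, s)) (μ := μ) (ν := μ) ?_
  · have hL : (∫ t, (∫ s, S.indicator g (t, s) ∂μ) ∂μ)
        = ∫ t in a..b, φ t * (∫ s in a..t, h s) := by
      rw [intervalIntegral.integral_of_le hab, hμ]
      apply setIntegral_congr_fun measurableSet_Ioc
      intro t ht
      dsimp only
      have h1 : (fun s => S.indicator g (t, s)) = (Set.Iic t).indicator (fun s => φ t * h s) := by
        funext s
        by_cases hst : s ≤ t <;> simp [Set.indicator_apply, hS, hg, hst]
      rw [h1, integral_indicator measurableSet_Iic,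
        Measure.restrict_restrict measurableSet_Iic]
      have h2 : Set.Iic t ∩ Set.Ioc a b = Set.Ioc a t := by
        ext s
        simp only [Set.mem_inter_iff, Set.mem_Iic, Set.mem_Ioc]
        exact ⟨fun ⟨h1', h2', _⟩ => ⟨h2', h1'⟩, fun ⟨h1', h2'⟩ => ⟨h2', h1', h2'.trans ht.2⟩⟩
      rw [h2, intervalIntegral.integral_of_le ht.1.le, integral_const_mul]
    have hR : (∫ s, (∫ t, S.indicator g (t, s) ∂μ) ∂μ)
        = ∫ s in a..b, (Φ b - Φ s) * h s := by
      rw [intervalIntegral.integral_of_le hab, hμ]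
      apply setIntegral_congr_fun measurableSet_Ioc
      intro s hs
      dsimp only
      have h1 : (fun t => S.indicator g (t, s)) = (Set.Ici s).indicator (fun t => φ t * h s) := by
        funext t
        by_cases hst : s ≤ t <;> simp [Set.indicator_apply, hS, hg, hst]
      rw [h1, integral_indicator measurableSet_Ici,
        Measure.restrict_restrict measurableSet_Ici]
      have h2 : Set.Ici s ∩ Set.Ioc a b = Set.Icc s b := by
        ext t
        simp only [Set.mem_inter_iff, Set.mem_Ici, Set.mem_Ioc, Set.mem_Icc]
        exact ⟨fun ⟨h1', _, h3'⟩ => ⟨h1', h3'⟩, fun ⟨h1', h2'⟩ => ⟨h1', hs.1.trans_le h1', h2'⟩⟩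
      rw [h2, integral_mul_const, integral_Icc_eq_integral_Ioc,
        ← intervalIntegral.integral_of_le hs.2,
        intervalIntegral.integral_eq_sub_of_hasDerivAt (fun x _ => hΦ x)
          (hφ.intervalIntegrable s b),
        mul_comm]
    rw [← hL, ← hR, swap]
  · convert hFint using 1; rfl

/-- Integration by parts where one factor is only an "indefinite integral". -/
lemma ibp' {w h Φ φ : ℝ → ℝ} (hw_cont : Continuous w)
    (hw : ∀ a b : ℝ, w b - w a = ∫ t in a..b, h t)
    (hh : ∀ a b : ℝ, IntervalIntegrable h volume a b)
    (hΦ : ∀ x, HasDerivAt Φ (φ x) x) (hφ : Continuous φ)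
    {a b : ℝ} (hab : a ≤ b) :
    Φ b * w b - Φ a * w a = ∫ t in a..b, (φ t * w t + Φ t * h t) := by
  have hΦc : Continuous Φ :=
    continuous_iff_continuousAt.2 fun x => (hΦ x).continuousAt
  have hΦh : IntervalIntegrable (fun t => Φ t * h t) volume a b :=
    (hh a b).continuousOn_mul hΦc.continuousOn
  have hΦbh : IntervalIntegrable (fun t => (Φ b - Φ t) * h t) volume a b :=
    (hh a b).continuousOn_mul (continuous_const.sub hΦc).continuousOn
  have hφw : IntervalIntegrable (fun t => φ t * w t) volume a b :=
    (hφ.mul hw_cont).intervalIntegrable a b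
  have hφint : (∫ t in a..b, φ t) = Φ b - Φ a :=
    intervalIntegral.integral_eq_sub_of_hasDerivAt (fun x _ => hΦ x) (hφ.intervalIntegrable a b)
  have key : (∫ t in a..b, φ t * (w t - w a)) = ∫ s in a..b, (Φ b - Φ s) * h s := by
    have h1 : (∫ t in a..b, φ t * (w t - w a)) = ∫ t in a..b, φ t * (∫ s in a..t, h s) := by
      apply intervalIntegral.integral_congr
      intro t _
      dsimp only
      rw [← hw a t]
    rw [h1]
    exact fubini_step' hab
      ((intervalIntegrable_iff_integrableOn_Ioc_of_le hab).1 (hh a b)) hΦ hφ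
  have split1 : (∫ t in a..b, (φ t * w t + Φ t * h t))
      = (∫ t in a..b, φ t * w t) + ∫ t in a..b, Φ t * h t :=
    intervalIntegral.integral_add hφw hΦh
  have split2 : (∫ t in a..b, φ t * w t)
      = (∫ t in a..b, φ t * w a) + ∫ t in a..b, φ t * (w t - w a) := by
    rw [← intervalIntegral.integral_add (f := fun t => φ t * w a) (g := fun t => φ t * (w t - w a)) ((hφ.mul continuous_const).intervalIntegrable a b)
      ((hφ.mul (hw_cont.sub continuous_const)).intervalIntegrable a b)]
    apply intervalIntegral.integral_congr
    intro t _
    ring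
  have e1 : (∫ t in a..b, φ t * w a) = (Φ b - Φ a) * w a := by
    rw [intervalIntegral.integral_mul_const, hφint]
  have e2 : (∫ s in a..b, (Φ b - Φ s) * h s) + (∫ t in a..b, Φ t * h t) = Φ b * (w b - w a) := by
    rw [← intervalIntegral.integral_add hΦbh hΦh]
    have h3 : (∫ t in a..b, ((Φ b - Φ t) * h t + Φ t * h t)) = ∫ t in a..b, Φ b * h t := by
      apply intervalIntegral.integral_congr
      intro t _
      ring
    rw [h3, intervalIntegral.integral_const_mul, ← hw a b]
  rw [split1, split2, e1, key]
  linear_combination -e2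

/-- Lemma 3.1: `v' ≥ v`, `|u'| ≥ u`, `v(x) ≥ e^{x-t} v(t)` for `x ≥ t`,
`u(x) ≥ e^{t-x} u(t)` for `x ≤ t`, and `ρ(x) = u(x) v(x) ≤ 1`. -/
theorem lemma_3_1 (q u v : ℝ → ℝ) (hq_loc : LocallyIntegrable q) (hq : ∀ x, 1 ≤ q x)
    (huv : IsPFSS q u v) :
    (∀ x : ℝ, v x ≤ deriv v x) ∧
    (∀ x : ℝ, u x ≤ |deriv u x|) ∧
    (∀ x t : ℝ, t ≤ x → Real.exp (x - t) * v t ≤ v x) ∧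
    (∀ x t : ℝ, x ≤ t → Real.exp (t - x) * u t ≤ u x) ∧
    (∀ x : ℝ, u x * v x ≤ 1) := by
  obtain ⟨hu1, hv1, hu2, hv2, hupos, hvpos, hu'neg, hv'pos, hwr, -,
    hu_top, hu'_top, hv_top, hv'_top, hv_bot, hv'_bot, hu_bot, hu'_bot⟩ := huv
  have hvc : Continuous v := hv1.continuous
  have huc : Continuous u := hu1.continuous
  have hv'c : Continuous (deriv v) := hv1.continuous_deriv le_rfl
  have hu'c : Continuous (deriv u) := hu1.continuous_deriv le_rfl
  have hvdiff : Differentiable ℝ v := hv1.differentiable one_ne_zero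
  have hudiff : Differentiable ℝ u := hu1.differentiable one_ne_zero
  have hq_ii : ∀ a b : ℝ, IntervalIntegrable q volume a b := by
    intro a b
    rw [intervalIntegrable_iff]
    exact (hq_loc.integrableOn_isCompact isCompact_Icc).mono_set Set.Ioc_subset_Icc_self
  have hqv_ii : ∀ a b : ℝ, IntervalIntegrable (fun t => q t * v t) volume a b :=
    fun a b => (hq_ii a b).mul_continuousOn hvc.continuousOn
  have hqu_ii : ∀ a b : ℝ, IntervalIntegrable (fun t => q t * u t) volume a b :=
    fun a b => (hq_ii a b).mul_continuousOn huc.continuousOn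
  have hΦn : ∀ x : ℝ, HasDerivAt (fun y => Real.exp (-y)) (-Real.exp (-x)) x := by
    intro x
    have h := (Real.hasDerivAt_exp (-x)).comp x (hasDerivAt_neg x)
    simpa [mul_comm, Function.comp_def] using h
  have hφn_cont : Continuous fun x : ℝ => -Real.exp (-x) :=
    (Real.continuous_exp.comp continuous_neg).neg
  -- Part 1 : v ≤ v'
  have hEmono : Monotone (fun x => Real.exp x * (deriv v x - v x)) := by
    intro a b hab
    have hibp := ibp' (w := deriv v) (h := fun t => q t * v t) (Φ := Real.exp) (φ := Real.exp)
      hv'c hv2 hqv_ii (fun x => Real.hasDerivAt_exp x) Real.continuous_exp hab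
    have hftc : Real.exp b * v b - Real.exp a * v a
        = ∫ t in a..b, (Real.exp t * v t + Real.exp t * deriv v t) := by
      refine (intervalIntegral.integral_eq_sub_of_hasDerivAt (f := fun y => Real.exp y * v y)
        (f' := fun t => Real.exp t * v t + Real.exp t * deriv v t)
        (fun x _ => ?_) ?_).symm
      · exact (Real.hasDerivAt_exp x).mul (hvdiff x).hasDerivAt
      · exact ((Real.continuous_exp.mul hvc).add
          (Real.continuous_exp.mul hv'c)).intervalIntegrable a b
    have int1 : IntervalIntegrable
        (fun t => Real.exp t * deriv v t + Real.exp t * (q t * v t)) volume a b :=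
      ((Real.continuous_exp.mul hv'c).intervalIntegrable a b).add
        ((hqv_ii a b).continuousOn_mul Real.continuous_exp.continuousOn)
    have int2 : IntervalIntegrable
        (fun t => Real.exp t * v t + Real.exp t * deriv v t) volume a b :=
      ((Real.continuous_exp.mul hvc).add (Real.continuous_exp.mul hv'c)).intervalIntegrable a b
    have hsub := intervalIntegral.integral_sub int1 int2
    have hkey : Real.exp b * (deriv v b - v b) - Real.exp a * (deriv v a - v a)
        = ∫ t in a..b, ((Real.exp t * deriv v t + Real.exp t * (q t * v t))
            - (Real.exp t * v t + Real.exp t * deriv v t)) := by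
      rw [hsub, ← hibp, ← hftc]; ring
    have hnn : 0 ≤ ∫ t in a..b, ((Real.exp t * deriv v t + Real.exp t * (q t * v t))
        - (Real.exp t * v t + Real.exp t * deriv v t)) := by
      apply intervalIntegral.integral_nonneg hab
      intro t _
      nlinarith [Real.exp_pos t, hvpos t, hq t,
        mul_nonneg (mul_nonneg (Real.exp_pos t).le (sub_nonneg.2 (hq t))) (hvpos t).le]
    dsimp only
    linarith [hkey ▸ hnn]
  have hElim : Tendsto (fun x => Real.exp x * (deriv v x - v x)) atBot (nhds 0) := by
    have h := Real.tendsto_exp_atBot.mul (hv'_bot.sub hv_bot)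
    simpa using h
  have hvv' : ∀ x, v x ≤ deriv v x := by
    intro x
    have h0 : (0:ℝ) ≤ Real.exp x * (deriv v x - v x) :=
      le_of_tendsto hElim (eventually_atBot.2 ⟨x, fun a ha => hEmono ha⟩)
    nlinarith [Real.exp_pos x]
  -- Part 2 : u' + u ≤ 0
  have hDmono : Monotone (fun x => Real.exp (-x) * (deriv u x + u x)) := by
    intro a b hab
    have hibp := ibp' (w := deriv u) (h := fun t => q t * u t) (Φ := fun y => Real.exp (-y))
      (φ := fun y => -Real.exp (-y)) hu'c hu2 hqu_ii hΦn hφn_cont hab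
    have hftc : Real.exp (-b) * u b - Real.exp (-a) * u a
        = ∫ t in a..b, (-Real.exp (-t) * u t + Real.exp (-t) * deriv u t) := by
      refine (intervalIntegral.integral_eq_sub_of_hasDerivAt (f := fun y => Real.exp (-y) * u y)
        (f' := fun t => -Real.exp (-t) * u t + Real.exp (-t) * deriv u t)
        (fun x _ => ?_) ?_).symm
      · exact (hΦn x).mul (hudiff x).hasDerivAt
      · exact ((hφn_cont.mul huc).add
          ((Real.continuous_exp.comp continuous_neg).mul hu'c)).intervalIntegrable a b
    have int1 : IntervalIntegrable
        (fun t => -Real.exp (-t) * deriv u t + Real.exp (-t) * (q t * u t)) volume a b :=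
      ((hφn_cont.mul hu'c).intervalIntegrable a b).add
        ((hqu_ii a b).continuousOn_mul (Real.continuous_exp.comp continuous_neg).continuousOn)
    have int2 : IntervalIntegrable
        (fun t => -Real.exp (-t) * u t + Real.exp (-t) * deriv u t) volume a b :=
      ((hφn_cont.mul huc).add
        ((Real.continuous_exp.comp continuous_neg).mul hu'c)).intervalIntegrable a b
    have hsum := intervalIntegral.integral_add int1 int2
    have hkey : Real.exp (-b) * (deriv u b + u b) - Real.exp (-a) * (deriv u a + u a)
        = ∫ t in a..b, ((-Real.exp (-t) * deriv u t + Real.exp (-t) * (q t * u t))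
            + (-Real.exp (-t) * u t + Real.exp (-t) * deriv u t)) := by
      rw [hsum, ← hibp, ← hftc]; ring
    have hnn : 0 ≤ ∫ t in a..b, ((-Real.exp (-t) * deriv u t + Real.exp (-t) * (q t * u t))
        + (-Real.exp (-t) * u t + Real.exp (-t) * deriv u t)) := by
      apply intervalIntegral.integral_nonneg hab
      intro t _
      nlinarith [Real.exp_pos (-t), hupos t, hq t,
        mul_nonneg (mul_nonneg (Real.exp_pos (-t)).le (sub_nonneg.2 (hq t))) (hupos t).le]
    dsimp only
    linarith [hkey ▸ hnn]
  have hDlim : Tendsto (fun x => Real.exp (-x) * (deriv u x + u x)) atTop (nhds 0) := by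
    have h1 : Tendsto (fun x : ℝ => Real.exp (-x)) atTop (nhds 0) :=
      Real.tendsto_exp_atBot.comp tendsto_neg_atTop_atBot
    have h := h1.mul (hu'_top.add hu_top)
    simpa using h
  have huu' : ∀ x, deriv u x + u x ≤ 0 := by
    intro x
    have h0 : Real.exp (-x) * (deriv u x + u x) ≤ 0 :=
      ge_of_tendsto hDlim (eventually_atTop.2 ⟨x, fun b hb => hDmono hb⟩)
    nlinarith [Real.exp_pos (-x)]
  -- pack conclusions
  refine ⟨hvv', ?_, ?_, ?_, ?_⟩
  · intro x
    rw [abs_of_neg (hu'neg x)]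
    linarith [huu' x]
  · -- exponential growth of v
    have hkmono : Monotone (fun y => Real.exp (-y) * v y) := by
      apply monotone_of_deriv_nonneg
      · exact fun x => ((hΦn x).mul (hvdiff x).hasDerivAt).differentiableAt
      · intro x
        rw [((hΦn x).fun_mul (hvdiff x).hasDerivAt).deriv]
        nlinarith [Real.exp_pos (-x), hvv' x]
    intro x t htx
    have h5 : Real.exp (-t) * v t ≤ Real.exp (-x) * v x := hkmono htx
    calc Real.exp (x - t) * v t = Real.exp x * (Real.exp (-t) * v t) := by
          rw [← mul_assoc, ← Real.exp_add, ← sub_eq_add_neg]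
      _ ≤ Real.exp x * (Real.exp (-x) * v x) :=
          mul_le_mul_of_nonneg_left h5 (Real.exp_pos x).le
      _ = v x := by rw [← mul_assoc, ← Real.exp_add]; simp
  · -- exponential decay of u
    have hmanti : Antitone (fun y => Real.exp y * u y) := by
      apply antitone_of_deriv_nonpos
      · exact fun x => ((Real.hasDerivAt_exp x).mul (hudiff x).hasDerivAt).differentiableAt
      · intro x
        rw [((Real.hasDerivAt_exp x).fun_mul (hudiff x).hasDerivAt).deriv]
        nlinarith [Real.exp_pos x, huu' x]
    intro x t hxt
    have h5 : Real.exp t * u t ≤ Real.exp x * u x := hmanti hxt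
    calc Real.exp (t - x) * u t = Real.exp (-x) * (Real.exp t * u t) := by
          rw [← mul_assoc, ← Real.exp_add, neg_add_eq_sub]
      _ ≤ Real.exp (-x) * (Real.exp x * u x) :=
          mul_le_mul_of_nonneg_left h5 (Real.exp_pos (-x)).le
      _ = u x := by rw [← mul_assoc, ← Real.exp_add]; simp
  · intro x
    have ha : 0 ≤ (deriv v x - v x) * u x :=
      mul_nonneg (sub_nonneg.2 (hvv' x)) (hupos x).le
    have hb : 0 ≤ (-u x - deriv u x) * v x :=
      mul_nonneg (by linarith [huu' x]) (hvpos x).le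
    nlinarith [hwr x, mul_pos (hupos x) (hvpos x)]
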